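/- Let v_1,...,v_n ∈ ℝ^m and r ∈ [0,1]. Every vertex of the union of the translated bounding boxes B^L ∪ B^R (from splitting v_1 by ratio r) lies inside the bounding box B of the unsplit parallelotope; consequently Vol(B^L ∪ B^R) ≤ Vol(B). -/

import Mathlib

open MeasureTheory Set

/-- Parallelotope generated by vectors `v 0, …, v n` in `ℝ^m`. -/
def parallelotope {n m : ℕ} (v : Fin n → Fin m → ℝ) : Set (Fin m → ℝ) :=
  {x | ∃ t : Fin n → ℝ, (∀ j, t j ∈ Set.Icc (0:ℝ) 1) ∧ x = ∑ j, t j • v j}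

/-- Smallest axis-aligned bounding box of a set in `ℝ^m`. -/
def bbox {m : ℕ} (P : Set (Fin m → ℝ)) : Set (Fin m → ℝ) :=
  Set.univ.pi fun i => Set.Icc (sInf ((fun x => x i) '' P)) (sSup ((fun x => x i) '' P))

lemma para_eq_image {n m : ℕ} (v : Fin n → Fin m → ℝ) :
    parallelotope v = (fun t : Fin n → ℝ => ∑ j, t j • v j) '' Set.Icc 0 1 := by
  ext x
  simp only [parallelotope, mem_setOf_eq, mem_image, Set.mem_Icc, Pi.le_def, Pi.zero_apply,
    Pi.one_apply]
  constructor
  · rintro ⟨t, ht, rfl⟩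
    exact ⟨t, ⟨fun j => (ht j).1, fun j => (ht j).2⟩, rfl⟩
  · rintro ⟨t, ⟨h0, h1⟩, rfl⟩
    exact ⟨t, fun j => ⟨h0 j, h1 j⟩, rfl⟩

lemma para_compact {n m : ℕ} (v : Fin n → Fin m → ℝ) : IsCompact (parallelotope v) := by
  rw [para_eq_image]
  exact isCompact_Icc.image
    (continuous_finset_sum _ fun j _ => (continuous_apply j).smul continuous_const)

lemma para_nonempty {n m : ℕ} (v : Fin n → Fin m → ℝ) : (parallelotope v).Nonempty :=
  ⟨0, 0, fun j => ⟨le_refl 0, zero_le_one⟩, by simp⟩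

lemma bbox_mono {m : ℕ} {P Q : Set (Fin m → ℝ)} (hPQ : P ⊆ Q) (hP : P.Nonempty)
    (hQ : IsCompact Q) : bbox P ⊆ bbox Q := by
  intro x hx i _
  have himg : ((fun y => y i) '' P) ⊆ ((fun y => y i) '' Q) := image_mono hPQ
  have hQc : IsCompact ((fun y => y i) '' Q) := hQ.image (continuous_apply i)
  have hPne : ((fun y => y i) '' P).Nonempty := hP.image _
  have hx' := hx i (mem_univ i)
  exact ⟨le_trans (csInf_le_csInf hQc.bddBelow hPne himg) hx'.1,
    le_trans hx'.2 (csSup_le_csSup hQc.bddAbove hPne himg)⟩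

lemma bbox_translate_subset {m : ℕ} {P Q : Set (Fin m → ℝ)} (c : Fin m → ℝ)
    (hPQ : (fun x => x + c) '' P ⊆ Q) (hPne : P.Nonempty) (hPc : IsCompact P)
    (hQ : IsCompact Q) : (fun x => x + c) '' bbox P ⊆ bbox Q := by
  rintro _ ⟨x, hx, rfl⟩ i _
  have hQc : IsCompact ((fun y => y i) '' Q) := hQ.image (continuous_apply i)
  have hPic : IsCompact ((fun y => y i) '' P) := hPc.image (continuous_apply i)
  have hPine : ((fun y => y i) '' P).Nonempty := hPne.image _
  obtain ⟨p, hp, hpi⟩ := hPic.sInf_mem hPine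
  obtain ⟨q, hq, hqi⟩ := hPic.sSup_mem hPine
  have h1 : sInf ((fun y => y i) '' P) + c i ∈ (fun y => y i) '' Q :=
    ⟨p + c, hPQ ⟨p, hp, rfl⟩, by simp [hpi]⟩
  have h2 : sSup ((fun y => y i) '' P) + c i ∈ (fun y => y i) '' Q :=
    ⟨q + c, hPQ ⟨q, hq, rfl⟩, by simp [hqi]⟩
  have hx' := hx i (mem_univ i)
  refine ⟨?_, ?_⟩
  · have := csInf_le hQc.bddBelow h1
    have h3 : (fun x => x + c) x i = x i + c i := rfl
    rw [h3]
    linarith [hx'.1]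
  · have := le_csSup hQc.bddAbove h2
    have h3 : (fun x => x + c) x i = x i + c i := rfl
    rw [h3]
    linarith [hx'.2]

lemma left_subset {n m : ℕ} (v : Fin (n + 1) → Fin m → ℝ) {r : ℝ}
    (hr : r ∈ Set.Icc (0:ℝ) 1) :
    parallelotope (Function.update v 0 (r • v 0)) ⊆ parallelotope v := by
  rintro _ ⟨t, ht, rfl⟩
  refine ⟨Function.update t 0 (r * t 0), ?_, ?_⟩
  · intro j
    rcases eq_or_ne j 0 with rfl | hj
    · simp only [Function.update_self]
      exact ⟨mul_nonneg hr.1 (ht 0).1, mul_le_one₀ hr.2 (ht 0).1 (ht 0).2⟩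
    · simpa [Function.update_of_ne hj] using ht j
  · refine Finset.sum_congr rfl fun j _ => ?_
    rcases eq_or_ne j 0 with rfl | hj
    · simp [smul_smul, mul_comm]
    · simp [Function.update_of_ne hj]

lemma right_subset {n m : ℕ} (v : Fin (n + 1) → Fin m → ℝ) {r : ℝ}
    (hr : r ∈ Set.Icc (0:ℝ) 1) :
    (fun x => x + r • v 0) '' parallelotope (Function.update v 0 ((1 - r) • v 0)) ⊆
      parallelotope v := by
  rintro _ ⟨x, ⟨t, ht, rfl⟩, rfl⟩
  refine ⟨Function.update t 0 ((1 - r) * t 0 + r), ?_, ?_⟩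
  · intro j
    rcases eq_or_ne j 0 with rfl | hj
    · simp only [Function.update_self]
      constructor
      · have := (ht 0).1
        nlinarith [hr.1, hr.2]
      · have := (ht 0).2
        nlinarith [hr.1, hr.2, (ht 0).1]
    · simpa [Function.update_of_ne hj] using ht j
  · simp only [Fin.sum_univ_succ, Function.update_self,
      Function.update_of_ne (Fin.succ_ne_zero _), smul_smul]
    rw [add_smul]
    ring_nf

theorem split_boxes_subset_and_volume_le {n m : ℕ} (v : Fin (n + 1) → Fin m → ℝ)
    (r : ℝ) (hr : r ∈ Set.Icc (0:ℝ) 1) :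
    let B := bbox (parallelotope v)
    let BL := bbox (parallelotope (Function.update v 0 (r • v 0)))
    let BR := (fun x => x + r • v 0) ''
      bbox (parallelotope (Function.update v 0 ((1 - r) • v 0)))
    BL ∪ BR ⊆ B ∧ volume (BL ∪ BR) ≤ volume B := by
  intro B BL BR
  have hsub : BL ∪ BR ⊆ B := by
    apply union_subset
    · exact bbox_mono (left_subset v hr) (para_nonempty _) (para_compact v)
    · exact bbox_translate_subset _ (right_subset v hr) (para_nonempty _)
        (para_compact _) (para_compact v)
  exact ⟨hsub, measure_mono hsub⟩
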